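/- The multivariate Beta function equals the Dirichlet integral: for positive reals α₁,…,α_M, the integral over the (M−1)-dimensional simplex {x ∈ ℝ^M : xᵢ ≥ 0, ∑xᵢ = 1} of ∏ᵢ xᵢ^{αᵢ−1} equals (∏ᵢ Γ(αᵢ))/Γ(∑ᵢ αᵢ). -/

import Mathlib

open Real Finset MeasureTheory

lemma measurableSet_simplex (n : ℕ) (c : ℝ) :
    MeasurableSet {x : Fin n → ℝ | (∀ i, 0 ≤ x i) ∧ (∑ i, x i) ≤ c} := by
  have : {x : Fin n → ℝ | (∀ i, 0 ≤ x i) ∧ (∑ i, x i) ≤ c} =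
      (⋂ i, {x : Fin n → ℝ | 0 ≤ x i}) ∩ {x | (∑ i, x i) ≤ c} := by
    ext x; simp [Set.mem_iInter]
  rw [this]
  exact (MeasurableSet.iInter fun i =>
      measurableSet_le measurable_const (measurable_pi_apply i)).inter
    (measurableSet_le (Finset.measurable_sum _ fun i _ => measurable_pi_apply i) measurable_const)

lemma lintegral_smul_comp {n : ℕ} (g : (Fin n → ℝ) → ENNReal) (hg : Measurable g)
    {s : ℝ} (hs : 0 < s) :
    ∫⁻ y, g y = ENNReal.ofReal (s ^ (n : ℝ)) * ∫⁻ z, g (s • z) := by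
  have hmap := Measure.map_addHaar_smul (volume : Measure (Fin n → ℝ)) (r := s) hs.ne'
  have h1 : ∫⁻ z, g (s • z) = ∫⁻ w, g w ∂(Measure.map (s • ·) volume) :=
    (lintegral_map hg (measurable_const_smul s)).symm
  rw [h1, hmap, lintegral_smul_measure, smul_eq_mul, ← mul_assoc, Module.finrank_fin_fun,
    abs_of_nonneg (inv_nonneg.2 (pow_nonneg hs.le _)), ← ENNReal.ofReal_mul (by positivity),
    Real.rpow_natCast, mul_inv_cancel₀ (by positivity), ENNReal.ofReal_one, one_mul]

lemma key_inner (n : ℕ) (β : Fin (n+1) → ℝ) (hβ : ∀ i, 0 < β i) {s : ℝ} (hs : 0 < s) :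
    (∫⁻ y, Set.indicator {y : Fin n → ℝ | (∀ i, 0 ≤ y i) ∧ (∑ i, y i) ≤ s}
      (fun y => ENNReal.ofReal ((∏ i : Fin n, y i ^ (β i.castSucc - 1)) *
        (s - ∑ i, y i) ^ (β (Fin.last n) - 1))) y)
    = ENNReal.ofReal (s ^ ((∑ i, β i) - 1)) *
      ∫⁻ z, Set.indicator {z : Fin n → ℝ | (∀ i, 0 ≤ z i) ∧ (∑ i, z i) ≤ 1}
        (fun z => ENNReal.ofReal ((∏ i : Fin n, z i ^ (β i.castSucc - 1)) *
          (1 - ∑ i, z i) ^ (β (Fin.last n) - 1))) z := by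
  set B : ℝ := ∑ i, β i with hBdef
  have hgmeas : Measurable (Set.indicator {y : Fin n → ℝ | (∀ i, 0 ≤ y i) ∧ (∑ i, y i) ≤ s}
      (fun y => ENNReal.ofReal ((∏ i : Fin n, y i ^ (β i.castSucc - 1)) *
        (s - ∑ i, y i) ^ (β (Fin.last n) - 1)))) := by
    refine Measurable.indicator ?_ (measurableSet_simplex n s)
    fun_prop
  rw [lintegral_smul_comp _ hgmeas hs]
  have hexp : ∑ i : Fin n, (β i.castSucc - 1) + (β (Fin.last n) - 1) = B - (n + 1) := by
    rw [Finset.sum_sub_distrib]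
    simp only [Finset.sum_const, Finset.card_univ, Fintype.card_fin, nsmul_eq_mul, mul_one]
    rw [hBdef, Fin.sum_univ_castSucc]
    ring
  have hpt : ∀ z : Fin n → ℝ,
      Set.indicator {y : Fin n → ℝ | (∀ i, 0 ≤ y i) ∧ (∑ i, y i) ≤ s}
        (fun y => ENNReal.ofReal ((∏ i : Fin n, y i ^ (β i.castSucc - 1)) *
          (s - ∑ i, y i) ^ (β (Fin.last n) - 1))) (s • z)
      = ENNReal.ofReal (s ^ (B - (n + 1) : ℝ)) *
        Set.indicator {z : Fin n → ℝ | (∀ i, 0 ≤ z i) ∧ (∑ i, z i) ≤ 1}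
          (fun z => ENNReal.ofReal ((∏ i : Fin n, z i ^ (β i.castSucc - 1)) *
            (1 - ∑ i, z i) ^ (β (Fin.last n) - 1))) z := by
    intro z
    have hsz : ∀ i, (s • z) i = s * z i := fun i => rfl
    have hsum : ∑ i, (s • z) i = s * ∑ i, z i := by
      simp only [hsz]; rw [Finset.mul_sum]
    by_cases hz : z ∈ {z : Fin n → ℝ | (∀ i, 0 ≤ z i) ∧ (∑ i, z i) ≤ 1}
    · have hmem : s • z ∈ {y : Fin n → ℝ | (∀ i, 0 ≤ y i) ∧ (∑ i, y i) ≤ s} := by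
        refine ⟨fun i => ?_, ?_⟩
        · rw [hsz]; exact mul_nonneg hs.le (hz.1 i)
        · rw [hsum]
          calc s * ∑ i, z i ≤ s * 1 := mul_le_mul_of_nonneg_left hz.2 hs.le
            _ = s := mul_one s
      rw [Set.indicator_of_mem hmem, Set.indicator_of_mem hz,
        ← ENNReal.ofReal_mul (Real.rpow_nonneg hs.le _)]
      congr 1
      have h1 : ∏ i : Fin n, ((s • z) i) ^ (β i.castSucc - 1)
          = s ^ (∑ i : Fin n, (β i.castSucc - 1)) * ∏ i : Fin n, (z i) ^ (β i.castSucc - 1) := by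
        rw [Real.rpow_sum_of_pos hs, ← Finset.prod_mul_distrib]
        refine Finset.prod_congr rfl fun i _ => ?_
        rw [hsz, Real.mul_rpow hs.le (hz.1 i)]
      have h2 : (s - ∑ i, (s • z) i) ^ (β (Fin.last n) - 1)
          = s ^ (β (Fin.last n) - 1) * (1 - ∑ i, z i) ^ (β (Fin.last n) - 1) := by
        rw [hsum, show s - s * ∑ i, z i = s * (1 - ∑ i, z i) by ring,
          Real.mul_rpow hs.le (by linarith [hz.2])]
      rw [h1, h2, ← hexp, Real.rpow_add hs]
      ring
    · have hnmem : s • z ∉ {y : Fin n → ℝ | (∀ i, 0 ≤ y i) ∧ (∑ i, y i) ≤ s} := by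
        intro hmem
        refine hz ⟨fun i => ?_, ?_⟩
        · have := hmem.1 i; rw [hsz] at this
          exact nonneg_of_mul_nonneg_right this hs
        · have := hmem.2; rw [hsum] at this
          exact (mul_le_iff_le_one_right hs).1 (by simpa using this)
      rw [Set.indicator_of_notMem hnmem, Set.indicator_of_notMem hz, mul_zero]
  simp only [hpt]
  rw [lintegral_const_mul' _ _ ENNReal.ofReal_ne_top, ← mul_assoc,
    ← ENNReal.ofReal_mul (Real.rpow_nonneg hs.le _), ← Real.rpow_add hs]
  have he : (n : ℝ) + (B - (↑n + 1)) = B - 1 := by ring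
  rw [he]

lemma real_beta (a b : ℝ) (ha : 0 < a) (hb : 0 < b) :
    ∫ x in (0:ℝ)..1, x ^ (a - 1) * (1 - x) ^ (b - 1) =
      Gamma a * Gamma b / Gamma (a + b) := by
  have h := Complex.Gamma_mul_Gamma_eq_betaIntegral (s := (a : ℂ)) (t := (b : ℂ))
    (by simpa using ha) (by simpa using hb)
  have hbeta : Complex.betaIntegral (a : ℂ) (b : ℂ) =
      ((∫ x in (0:ℝ)..1, x ^ (a - 1) * (1 - x) ^ (b - 1) : ℝ) : ℂ) := by
    rw [Complex.betaIntegral, ← intervalIntegral.integral_ofReal]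
    refine intervalIntegral.integral_congr fun x hx => ?_
    rw [Set.uIcc_of_le (by norm_num : (0:ℝ) ≤ 1)] at hx
    rw [Complex.ofReal_mul, Complex.ofReal_cpow hx.1,
      Complex.ofReal_cpow (by linarith [hx.2] : (0:ℝ) ≤ 1 - x)]
    push_cast
    ring
  rw [hbeta, ← Complex.ofReal_add, Complex.Gamma_ofReal, Complex.Gamma_ofReal,
    Complex.Gamma_ofReal, ← Complex.ofReal_mul, ← Complex.ofReal_mul] at h
  have h2 := Complex.ofReal_injective h
  have hG : Gamma (a + b) ≠ 0 := (Gamma_pos_of_pos (by linarith)).ne'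
  field_simp
  linarith [h2]

lemma beta_integrableOn (a b : ℝ) (ha : 0 < a) (hb : 0 < b) :
    IntegrableOn (fun x : ℝ => x ^ (a - 1) * (1 - x) ^ (b - 1)) (Set.Ioo 0 1) := by
  have h := Complex.betaIntegral_convergent (u := (a:ℂ)) (v := (b:ℂ))
    (by simpa using ha) (by simpa using hb)
  have h2 : IntegrableOn (fun x : ℝ => (x:ℂ) ^ ((a:ℂ) - 1) * (1 - (x:ℂ)) ^ ((b:ℂ) - 1))
      (Set.Ioc 0 1) := by
    simpa [intervalIntegrable_iff, Set.uIoc_of_le (zero_le_one (α := ℝ))] using h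
  have h4 : IntegrableOn (fun x : ℝ =>
      ((x:ℂ) ^ ((a:ℂ) - 1) * (1 - (x:ℂ)) ^ ((b:ℂ) - 1)).re) (Set.Ioo 0 1) :=
    (h2.mono_set Set.Ioo_subset_Ioc_self).re
  refine h4.congr_fun (fun x hx => ?_) measurableSet_Ioo
  dsimp only
  rw [show ((a:ℂ) - 1) = ((a - 1 : ℝ) : ℂ) by push_cast; ring,
    show (1 - (x:ℂ)) = (((1 - x : ℝ)) : ℂ) by push_cast; ring,
    show ((b:ℂ) - 1) = ((b - 1 : ℝ) : ℂ) by push_cast; ring,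
    ← Complex.ofReal_cpow hx.1.le, ← Complex.ofReal_cpow (by linarith [hx.2] : (0:ℝ) ≤ 1 - x),
    ← Complex.ofReal_mul, Complex.ofReal_re]

lemma measurable_dint (n : ℕ) (α : Fin (n + 1) → ℝ) :
    Measurable fun x : Fin n → ℝ =>
      (∏ i : Fin n, x i ^ (α i.castSucc - 1)) * (1 - ∑ i, x i) ^ (α (Fin.last n) - 1) := by
  fun_prop

lemma dirichlet_lintegral : ∀ (n : ℕ) (α : Fin (n + 1) → ℝ), (∀ i, 0 < α i) →
    (∫⁻ x, Set.indicator {x : Fin n → ℝ | (∀ i, 0 ≤ x i) ∧ (∑ i, x i) ≤ 1}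
        (fun x => ENNReal.ofReal ((∏ i : Fin n, x i ^ (α i.castSucc - 1)) *
          (1 - ∑ i, x i) ^ (α (Fin.last n) - 1))) x)
      = ENNReal.ofReal ((∏ i, Real.Gamma (α i)) / Real.Gamma (∑ i, α i)) := by
  intro n
  induction n with
  | zero =>
    intro α hα
    have hset : {x : Fin 0 → ℝ | (∀ i, 0 ≤ x i) ∧ (∑ i, x i) ≤ 1} = Set.univ := by
      ext x; simp
    rw [hset, Set.indicator_univ]
    simp only [Finset.univ_eq_empty, Finset.prod_empty, Finset.sum_empty, sub_zero,
      Real.one_rpow, one_mul]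
    have huniv : (volume : Measure (Fin 0 → ℝ)) Set.univ = 1 := by
      rw [MeasureTheory.volume_pi, Measure.pi_univ]; simp
    rw [lintegral_const, huniv, mul_one]
    rw [Fin.sum_univ_one, Fin.prod_univ_one, div_self (Real.Gamma_pos_of_pos (hα 0)).ne',
      ENNReal.ofReal_one]
  | succ n IH =>
    intro α hα
    set β : Fin (n + 1) → ℝ := fun i => α i.succ with hβdef
    have hβ : ∀ i, 0 < β i := fun i => hα i.succ
    set B : ℝ := ∑ i, β i with hBdef
    have hB : 0 < B := Finset.sum_pos (fun i _ => hβ i) univ_nonempty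
    set Cβ : ℝ := (∏ i, Real.Gamma (β i)) / Real.Gamma B with hCβdef
    have hCβ : 0 < Cβ := div_pos (Finset.prod_pos fun i _ => Real.Gamma_pos_of_pos (hβ i))
      (Real.Gamma_pos_of_pos hB)
    have hIH := IH β hβ
    set F : (Fin (n+1) → ℝ) → ENNReal :=
      Set.indicator {x : Fin (n+1) → ℝ | (∀ i, 0 ≤ x i) ∧ (∑ i, x i) ≤ 1}
        (fun x => ENNReal.ofReal ((∏ i : Fin (n+1), x i ^ (α i.castSucc - 1)) *
          (1 - ∑ i, x i) ^ (α (Fin.last (n+1)) - 1))) with hFdef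
    have hFmeas : Measurable F :=
      ((measurable_dint (n+1) α).ennreal_ofReal).indicator (measurableSet_simplex _ 1)
    have hmem : ∀ (t : ℝ) (y : Fin n → ℝ),
        ((Fin.cons t y : Fin (n+1) → ℝ) ∈
          {x : Fin (n+1) → ℝ | (∀ i, 0 ≤ x i) ∧ (∑ i, x i) ≤ 1}) ↔
        ((0 ≤ t ∧ ∀ i, 0 ≤ y i) ∧ t + ∑ i, y i ≤ 1) := by
      intro t y
      simp only [Set.mem_setOf_eq, Fin.sum_cons, Fin.forall_fin_succ, Fin.cons_zero,
        Fin.cons_succ]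
    -- Step A: transfer to the product space
    have hA : ∫⁻ x, F x = ∫⁻ p : ℝ × (Fin n → ℝ), F (Fin.cons p.1 p.2) := by
      have hmp := (volume_preserving_piFinSuccAbove (fun _ : Fin (n + 1) => ℝ) 0).symm
      rw [← hmp.lintegral_comp hFmeas]
      refine lintegral_congr fun p => ?_
      congr 1
      simp [MeasurableEquiv.piFinSuccAbove, Fin.insertNthEquiv, Fin.insertNth_zero']
    have hcons : Measurable fun p : ℝ × (Fin n → ℝ) => (Fin.cons p.1 p.2 : Fin (n+1) → ℝ) := by
      refine measurable_pi_iff.2 fun i => ?_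
      refine Fin.cases ?_ ?_ i
      · simpa using measurable_fst
      · intro j; exact (measurable_pi_apply j).comp measurable_snd
    have hTon : ∫⁻ p : ℝ × (Fin n → ℝ), F (Fin.cons p.1 p.2)
        = ∫⁻ t : ℝ, ∫⁻ y : Fin n → ℝ, F (Fin.cons t y) := by
      rw [Measure.volume_eq_prod, lintegral_prod]
      exact (hFmeas.comp hcons).aemeasurable
    -- pointwise inner integral
    have hinner : ∀ t : ℝ, t ≠ 1 → (∫⁻ y : Fin n → ℝ, F (Fin.cons t y))
        = Set.indicator (Set.Ico (0:ℝ) 1)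
            (fun t => ENNReal.ofReal (t ^ (α 0 - 1) * ((1 - t) ^ (B - 1) * Cβ))) t := by
      intro t ht
      by_cases h0 : 0 ≤ t
      · by_cases h1 : t < 1
        · -- main case
          have hs : 0 < 1 - t := by linarith
          have hFK : ∀ y : Fin n → ℝ, F (Fin.cons t y)
              = ENNReal.ofReal (t ^ (α 0 - 1)) *
                Set.indicator {y : Fin n → ℝ | (∀ i, 0 ≤ y i) ∧ (∑ i, y i) ≤ 1 - t}
                  (fun y => ENNReal.ofReal ((∏ i : Fin n, y i ^ (β i.castSucc - 1)) *
                    ((1 - t) - ∑ i, y i) ^ (β (Fin.last n) - 1))) y := by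
            intro y
            by_cases hy : y ∈ {y : Fin n → ℝ | (∀ i, 0 ≤ y i) ∧ (∑ i, y i) ≤ 1 - t}
            · have hyS : (Fin.cons t y : Fin (n+1) → ℝ) ∈
                  {x : Fin (n+1) → ℝ | (∀ i, 0 ≤ x i) ∧ (∑ i, x i) ≤ 1} :=
                (hmem t y).2 ⟨⟨h0, hy.1⟩, by have := hy.2; linarith⟩
              rw [hFdef, Set.indicator_of_mem hyS, Set.indicator_of_mem hy,
                ← ENNReal.ofReal_mul (Real.rpow_nonneg h0 _)]
              congr 1
              rw [Fin.prod_univ_succ]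
              simp only [Fin.cons_zero, Fin.cons_succ, Fin.sum_cons, Fin.castSucc_zero]
              have hlast : α (Fin.last (n+1)) = β (Fin.last n) := by
                rw [hβdef]; simp [Fin.succ_last]
              have hsucc : ∀ i : Fin n, α (Fin.succ i).castSucc = β i.castSucc := by
                intro i; rw [hβdef]; exact congrArg α (Fin.succ_castSucc i).symm
              simp only [hlast, hsucc]
              have h3 : (1 : ℝ) - (t + ∑ i, y i) = (1 - t) - ∑ i, y i := by ring
              rw [h3]; ring
            · have hnS : (Fin.cons t y : Fin (n+1) → ℝ) ∉
                  {x : Fin (n+1) → ℝ | (∀ i, 0 ≤ x i) ∧ (∑ i, x i) ≤ 1} := by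
                intro hc
                rw [hmem] at hc
                exact hy ⟨hc.1.2, by have := hc.2; linarith⟩
              rw [hFdef, Set.indicator_of_notMem hnS, Set.indicator_of_notMem hy, mul_zero]
          simp only [hFK]
          rw [lintegral_const_mul' _ _ ENNReal.ofReal_ne_top, key_inner n β hβ hs, hIH]
          rw [Set.indicator_of_mem (Set.mem_Ico.2 ⟨h0, h1⟩)]
          rw [← hBdef, ← hCβdef, ← ENNReal.ofReal_mul (Real.rpow_nonneg hs.le _),
            ← ENNReal.ofReal_mul (Real.rpow_nonneg h0 _)]
        · -- t > 1
          have h1' : 1 < t := lt_of_le_of_ne (not_lt.1 h1) (Ne.symm ht)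
          have hz : ∀ y : Fin n → ℝ, F (Fin.cons t y) = 0 := by
            intro y
            refine Set.indicator_of_notMem ?_ _
            intro hc
            rw [hmem] at hc
            have hsum : 0 ≤ ∑ i, y i := Finset.sum_nonneg fun i _ => hc.1.2 i
            linarith [hc.2]
          simp only [hz, lintegral_zero]
          rw [Set.indicator_of_notMem (by simp [Set.mem_Ico]; intro h; linarith)]
      · -- t < 0
        have hz : ∀ y : Fin n → ℝ, F (Fin.cons t y) = 0 := by
          intro y
          refine Set.indicator_of_notMem ?_ _
          intro hc
          rw [hmem] at hc
          exact h0 hc.1.1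
        simp only [hz, lintegral_zero]
        rw [Set.indicator_of_notMem (by simp [Set.mem_Ico]; intro h; exact absurd h h0)]
    -- outer integral
    have houter : (∫⁻ t : ℝ, ∫⁻ y : Fin n → ℝ, F (Fin.cons t y))
        = ∫⁻ t : ℝ, Set.indicator (Set.Ico (0:ℝ) 1)
            (fun t => ENNReal.ofReal (t ^ (α 0 - 1) * ((1 - t) ^ (B - 1) * Cβ))) t := by
      refine lintegral_congr_ae ?_
      filter_upwards [compl_mem_ae_iff.2 (measure_singleton (1:ℝ))] with t ht
      exact hinner t ht
    rw [hA, hTon, houter, lintegral_indicator measurableSet_Ico]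
    have hIoo : (∫⁻ t in Set.Ico (0:ℝ) 1,
          ENNReal.ofReal (t ^ (α 0 - 1) * ((1 - t) ^ (B - 1) * Cβ)))
        = ∫⁻ t in Set.Ioo (0:ℝ) 1,
          ENNReal.ofReal (t ^ (α 0 - 1) * ((1 - t) ^ (B - 1) * Cβ)) :=
      (setLIntegral_congr Ioo_ae_eq_Ico).symm
    rw [hIoo]
    have hint : IntegrableOn (fun t : ℝ => t ^ (α 0 - 1) * ((1 - t) ^ (B - 1) * Cβ))
        (Set.Ioo (0:ℝ) 1) := by
      have h := (beta_integrableOn (α 0) B (hα 0) hB).mul_const Cβ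
      exact IntegrableOn.congr_fun h (fun x _ => by ring) measurableSet_Ioo
    have hnn : 0 ≤ᵐ[volume.restrict (Set.Ioo (0:ℝ) 1)]
        fun t : ℝ => t ^ (α 0 - 1) * ((1 - t) ^ (B - 1) * Cβ) := by
      refine (ae_restrict_iff' measurableSet_Ioo).2 (ae_of_all _ fun t htm => ?_)
      have h1 : (0:ℝ) ≤ t ^ (α 0 - 1) := Real.rpow_nonneg htm.1.le _
      have h2 : (0:ℝ) ≤ (1 - t) ^ (B - 1) := Real.rpow_nonneg (by linarith [htm.2]) _
      positivity
    rw [← ofReal_integral_eq_lintegral_ofReal hint hnn]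
    have hval : (∫ t in Set.Ioo (0:ℝ) 1, t ^ (α 0 - 1) * ((1 - t) ^ (B - 1) * Cβ))
        = (Gamma (α 0) * Gamma B / Gamma (α 0 + B)) * Cβ := by
      rw [← MeasureTheory.integral_Ioc_eq_integral_Ioo,
        ← intervalIntegral.integral_of_le (zero_le_one (α := ℝ))]
      simp only [← mul_assoc]
      rw [intervalIntegral.integral_mul_const, real_beta (α 0) B (hα 0) hB]
    rw [hval]
    congr 1
    have hsum : ∑ i, α i = α 0 + B := by rw [Fin.sum_univ_succ, hBdef]
    have hprod : ∏ i, Real.Gamma (α i) = Real.Gamma (α 0) * ∏ i, Real.Gamma (β i) := by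
      rw [Fin.prod_univ_succ]
    rw [hsum, hprod, hCβdef]
    have hG1 : Real.Gamma (α 0 + B) ≠ 0 := (Real.Gamma_pos_of_pos (by linarith [hα 0])).ne'
    have hG2 : Real.Gamma B ≠ 0 := (Real.Gamma_pos_of_pos hB).ne'
    field_simp

/-- Dirichlet integral: for positive reals `α₁,…,α_M` (here `M = n + 1`), the integral of
`∏ᵢ xᵢ^(αᵢ-1)` over the simplex `{x ∈ ℝ^M : xᵢ ≥ 0, ∑ xᵢ = 1}`, parameterized by the
first `n` coordinates (with `x_M = 1 - ∑_{i<M} xᵢ`), equals `(∏ᵢ Γ(αᵢ))/Γ(∑ᵢ αᵢ)`. -/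
theorem dirichlet_integral (n : ℕ) (α : Fin (n + 1) → ℝ) (hα : ∀ i, 0 < α i) :
    ∫ x in {x : Fin n → ℝ | (∀ i, 0 ≤ x i) ∧ (∑ i, x i) ≤ 1},
        (∏ i : Fin n, x i ^ (α i.castSucc - 1)) * (1 - ∑ i, x i) ^ (α (Fin.last n) - 1) =
      (∏ i, Real.Gamma (α i)) / Real.Gamma (∑ i, α i) := by
  have hS := measurableSet_simplex n 1
  have hf := measurable_dint n α
  have hnn : 0 ≤ᵐ[volume.restrict {x : Fin n → ℝ | (∀ i, 0 ≤ x i) ∧ (∑ i, x i) ≤ 1}]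
      fun x => (∏ i : Fin n, x i ^ (α i.castSucc - 1)) *
        (1 - ∑ i, x i) ^ (α (Fin.last n) - 1) := by
    refine (ae_restrict_iff' hS).2 (ae_of_all _ fun x hx => ?_)
    exact mul_nonneg (Finset.prod_nonneg fun i _ => Real.rpow_nonneg (hx.1 i) _)
      (Real.rpow_nonneg (by linarith [hx.2]) _)
  rw [integral_eq_lintegral_of_nonneg_ae hnn hf.aestronglyMeasurable]
  rw [← lintegral_indicator hS, dirichlet_lintegral n α hα]
  exact ENNReal.toReal_ofReal (div_nonneg
    (Finset.prod_nonneg fun i _ => (Real.Gamma_pos_of_pos (hα i)).le)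
    (Real.Gamma_pos_of_pos (Finset.sum_pos (fun i _ => hα i) univ_nonempty)).le)
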